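/- For N = ⌈(L/μ) ln(μ(f(x_0) − f*)/(6Δ²))⌉ iterations of the inexact gradient method with step 1/L on an L-smooth PL function, one has (1 − μ/L)^N (f(x_0) − f*) ≤ 6Δ²/μ and hence f(x_N) − f* ≤ 7Δ²/μ. -/

import Mathlib

open scoped RealInnerProductSpace

theorem stmt10 {n : ℕ} (f : EuclideanSpace ℝ (Fin n) → ℝ) (L μ Δ fstar : ℝ)
    (hμ : 0 < μ) (hμL : μ ≤ L) (hΔ : 0 < Δ)
    (x : ℕ → EuclideanSpace ℝ (Fin n))
    (hgap : 6 * Δ ^ 2 < μ * (f (x 0) - fstar))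
    (hconv : ∀ k : ℕ, f (x k) - fstar ≤
      (1 - μ / L) ^ k * (f (x 0) - fstar) + Δ ^ 2 / (2 * μ))
    (N : ℕ)
    (hN : N = ⌈(L / μ) * Real.log (μ * (f (x 0) - fstar) / (6 * Δ ^ 2))⌉₊) :
    (1 - μ / L) ^ N * (f (x 0) - fstar) ≤ 6 * Δ ^ 2 / μ ∧
    f (x N) - fstar ≤ 7 * Δ ^ 2 / μ := by
  have hL : 0 < L := lt_of_lt_of_le hμ hμL
  set G := f (x 0) - fstar with hG
  have hΔ2 : 0 < Δ ^ 2 := by positivity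
  have hGpos : 0 < G := by nlinarith
  have harg : 1 < μ * G / (6 * Δ ^ 2) := by
    rw [lt_div_iff₀ (by positivity)]; linarith
  have hlogpos : 0 < Real.log (μ * G / (6 * Δ ^ 2)) := Real.log_pos harg
  have hNge : (L / μ) * Real.log (μ * G / (6 * Δ ^ 2)) ≤ (N : ℝ) := by
    rw [hN]; exact Nat.le_ceil _
  have h1 : (0:ℝ) ≤ 1 - μ / L := by
    have : μ / L ≤ 1 := (div_le_one hL).mpr hμL
    linarith
  have hexp : (1 - μ / L) ^ N ≤ Real.exp (-(μ / L) * N) := by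
    calc (1 - μ / L) ^ N ≤ (Real.exp (-(μ / L))) ^ N := by
          apply pow_le_pow_left₀ h1
          have := Real.add_one_le_exp (-(μ / L))
          linarith
      _ = Real.exp (-(μ / L) * N) := by rw [← Real.exp_nat_mul]; ring_nf
  have hexp2 : Real.exp (-(μ / L) * N) ≤ 6 * Δ ^ 2 / (μ * G) := by
    have h2 : Real.log (μ * G / (6 * Δ ^ 2)) ≤ (μ / L) * N := by
      have hml : 0 < μ / L := by positivity
      have h3 := mul_le_mul_of_nonneg_left hNge hml.le
      calc Real.log (μ * G / (6 * Δ ^ 2))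
          = μ / L * (L / μ * Real.log (μ * G / (6 * Δ ^ 2))) := by field_simp
        _ ≤ μ / L * N := h3
    have : Real.exp (-(μ / L) * N) ≤ Real.exp (-Real.log (μ * G / (6 * Δ ^ 2))) := by
      apply Real.exp_le_exp.mpr; linarith
    calc Real.exp (-(μ / L) * N) ≤ Real.exp (-Real.log (μ * G / (6 * Δ ^ 2))) := this
      _ = 6 * Δ ^ 2 / (μ * G) := by
          rw [Real.exp_neg, Real.exp_log (by positivity)]
          rw [inv_div]
  have hkey : (1 - μ / L) ^ N * G ≤ 6 * Δ ^ 2 / μ := by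
    have := mul_le_mul_of_nonneg_right (hexp.trans hexp2) hGpos.le
    calc (1 - μ / L) ^ N * G ≤ 6 * Δ ^ 2 / (μ * G) * G := this
      _ = 6 * Δ ^ 2 / μ := by field_simp
  refine ⟨hkey, ?_⟩
  have := hconv N
  have hhalf : Δ ^ 2 / (2 * μ) ≤ Δ ^ 2 / μ := by
    apply div_le_div_of_nonneg_left hΔ2.le hμ; linarith
  have : f (x N) - fstar ≤ 6 * Δ ^ 2 / μ + Δ ^ 2 / μ := by linarith
  calc f (x N) - fstar ≤ 6 * Δ ^ 2 / μ + Δ ^ 2 / μ := this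
    _ = 7 * Δ ^ 2 / μ := by ring
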